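/- Let n ≥ 1, let q ∈ ℂ with q ≠ −1, and let U = (u_{ij}) and V = (v^{kl}) be nonzero n×n complex matrices. Let S be the TL-type operator attached to q, U, V. Then S satisfies the Hecke quadratic relation (I + S)(q·I − S) = 0 (where I is the identity n²×n² matrix) if and only if tr(U·Vᵀ) = 1, i.e. Σ_{i,j} u_{ij} v^{ij} = 1. -/
import Mathlib


open Matrix

/-- The TL-type (rank-2 even Hecke symmetry) operator attached to `q`, `U`, `V`:
the `n² × n²` matrix with entry `S_{ij}^{kl} = q·δ_i^k·δ_j^l − (1+q)·u_{ij}·v^{kl}`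
at row `(i,j)` and column `(k,l)`. -/
def TLop (n : ℕ) (q : ℂ) (U V : Matrix (Fin n) (Fin n) ℂ) :
    Matrix (Fin n × Fin n) (Fin n × Fin n) ℂ :=
  fun p r =>
    q * (if p.1 = r.1 then 1 else 0) * (if p.2 = r.2 then 1 else 0)
      - (1 + q) * U p.1 p.2 * V r.1 r.2

lemma tl_trace_sum {n : ℕ} (U V : Matrix (Fin n) (Fin n) ℂ) :
    (U * Vᵀ).trace = ∑ s : Fin n × Fin n, U s.1 s.2 * V s.1 s.2 := by
  rw [Matrix.trace, Fintype.sum_prod_type]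
  simp [Matrix.diag, Matrix.mul_apply, Matrix.transpose_apply]

lemma tl_key {n : ℕ} (q : ℂ) (U V : Matrix (Fin n) (Fin n) ℂ) (p r : Fin n × Fin n) :
    ((1 + TLop n q U V) *
        (q • (1 : Matrix (Fin n × Fin n) (Fin n × Fin n) ℂ) - TLop n q U V)) p r
      = (1 + q) ^ 2 * (1 - (U * Vᵀ).trace) * (U p.1 p.2 * V r.1 r.2) := by
  have h1 : ∀ s : Fin n × Fin n, (1 + TLop n q U V) p s
      = (1 + q) * ((if p = s then (1 : ℂ) else 0) - U p.1 p.2 * V s.1 s.2) := by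
    intro s
    simp only [Matrix.add_apply, Matrix.one_apply, TLop, Prod.ext_iff]
    by_cases h1 : p.1 = s.1 <;> by_cases h2 : p.2 = s.2 <;> simp [h1, h2] <;> ring
  have h2 : ∀ s : Fin n × Fin n,
      (q • (1 : Matrix (Fin n × Fin n) (Fin n × Fin n) ℂ) - TLop n q U V) s r
      = (1 + q) * (U s.1 s.2 * V r.1 r.2) := by
    intro s
    simp only [Matrix.sub_apply, Matrix.smul_apply, Matrix.one_apply, TLop, Prod.ext_iff,
      smul_eq_mul]
    by_cases h1 : s.1 = r.1 <;> by_cases h2 : s.2 = r.2 <;> simp [h1, h2] <;> ring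
  rw [Matrix.mul_apply]
  have expand : ∀ s : Fin n × Fin n,
      (1 + q) * ((if p = s then (1 : ℂ) else 0) - U p.1 p.2 * V s.1 s.2) *
        ((1 + q) * (U s.1 s.2 * V r.1 r.2))
      = (if p = s then (1 + q) ^ 2 * (U s.1 s.2 * V r.1 r.2) else 0)
        - (1 + q) ^ 2 * U p.1 p.2 * V r.1 r.2 * (U s.1 s.2 * V s.1 s.2) := by
    intro s; split_ifs <;> ring
  calc (∑ s, (1 + TLop n q U V) p s *
        (q • (1 : Matrix (Fin n × Fin n) (Fin n × Fin n) ℂ) - TLop n q U V) s r)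
      = ∑ s : Fin n × Fin n,
          ((if p = s then (1 + q) ^ 2 * (U s.1 s.2 * V r.1 r.2) else 0)
            - (1 + q) ^ 2 * U p.1 p.2 * V r.1 r.2 * (U s.1 s.2 * V s.1 s.2)) := by
        refine Finset.sum_congr rfl fun s _ => ?_
        rw [h1 s, h2 s, expand s]
    _ = (1 + q) ^ 2 * (U p.1 p.2 * V r.1 r.2)
          - (1 + q) ^ 2 * U p.1 p.2 * V r.1 r.2 *
            (∑ s : Fin n × Fin n, U s.1 s.2 * V s.1 s.2) := by
        rw [Finset.sum_sub_distrib, Finset.sum_ite_eq, ← Finset.mul_sum]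
        simp
    _ = (1 + q) ^ 2 * (1 - (U * Vᵀ).trace) * (U p.1 p.2 * V r.1 r.2) := by
        rw [tl_trace_sum]; ring

/-- for `n ≥ 1`, `q ≠ −1` and nonzero `U`, `V`, the TL-type operator `S`
satisfies the Hecke quadratic relation `(I + S)(q·I − S) = 0` iff `tr(U·Vᵀ) = 1`. -/
theorem tl_hecke_iff_trace_one (n : ℕ) (hn : 1 ≤ n) (q : ℂ) (hq : q ≠ -1)
    (U V : Matrix (Fin n) (Fin n) ℂ) (hU : U ≠ 0) (hV : V ≠ 0) :
    (1 + TLop n q U V) *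
        (q • (1 : Matrix (Fin n × Fin n) (Fin n × Fin n) ℂ) - TLop n q U V) = 0 ↔
      (U * Vᵀ).trace = 1 := by
  have h1q : (1 + q) ≠ 0 := by
    intro h; exact hq (by linear_combination h)
  constructor
  · intro h
    obtain ⟨i, j, hij⟩ : ∃ i j, U i j ≠ 0 := by
      by_contra h'; push_neg at h'; exact hU (Matrix.ext h')
    obtain ⟨k, l, hkl⟩ : ∃ k l, V k l ≠ 0 := by
      by_contra h'; push_neg at h'; exact hV (Matrix.ext h')
    have hz := tl_key q U V (i, j) (k, l)
    rw [h] at hz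
    simp only [Matrix.zero_apply] at hz
    rcases mul_eq_zero.mp hz.symm with h' | h'
    · rcases mul_eq_zero.mp h' with h'' | h''
      · exact absurd h'' (pow_ne_zero 2 h1q)
      · linear_combination -h''
    · rcases mul_eq_zero.mp h' with h'' | h''
      · exact absurd h'' hij
      · exact absurd h'' hkl
  · intro ht
    ext p r
    rw [tl_key, ht]
    simp
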